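/- Let a and b be two linearly independent vectors of a real inner product space (so in particular a − P_b(a) ≠ 0 and b − P_a(b) ≠ 0). Then cos(α(a − P_b(a), b − P_a(b))) = −cos(α(a, b)), where α(u, v) denotes the angle between two nonzero vectors u and v. -/

import Mathlib

/-- **Lemma (residual angle reversal).**
Let `a` and `b` be two linearly independent vectors of a real inner product space (so in
particular `a − P_b(a) ≠ 0` and `b − P_a(b) ≠ 0`). Then
`cos(α(a − P_b(a), b − P_a(b))) = −cos(α(a, b))`, where `P_b(x) = (⟨x,b⟩/‖b‖²)·b` is the
orthogonal projection onto the line spanned by `b` and `α(u,v)` is the angle between the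
nonzero vectors `u` and `v`. -/
theorem cos_angle_residuals_eq_neg_cos_angle
    {E : Type*} [NormedAddCommGroup E] [InnerProductSpace ℝ E]
    (a b : E) (hab : LinearIndependent ℝ ![a, b])
    (Pba : E) (hPba : Pba = ((inner ℝ a b : ℝ) / ‖b‖ ^ 2) • b)
    (Pab : E) (hPab : Pab = ((inner ℝ b a : ℝ) / ‖a‖ ^ 2) • a) :
    Real.cos (InnerProductGeometry.angle (a - Pba) (b - Pab)) =
      -Real.cos (InnerProductGeometry.angle a b) := by
  rw [linearIndependent_fin2] at hab
  obtain ⟨hb, hnotsmul⟩ := hab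
  simp only [Matrix.cons_val_one, Matrix.head_cons, Matrix.cons_val_zero] at hb hnotsmul
  have ha : a ≠ 0 := fun h => hnotsmul 0 (by simp [h])
  have hna : (0:ℝ) < ‖a‖ := norm_pos_iff.mpr ha
  have hnb : (0:ℝ) < ‖b‖ := norm_pos_iff.mpr hb
  set c : ℝ := inner ℝ a b with hc
  -- strict Cauchy-Schwarz
  have h1 : c < ‖a‖ * ‖b‖ := by
    have : (inner ℝ b a : ℝ) < ‖b‖ * ‖a‖ := by
      refine inner_lt_norm_mul_iff_real.mpr fun h => hnotsmul (‖a‖ / ‖b‖) ?_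
      rw [div_eq_inv_mul, ← smul_smul, h, smul_smul, inv_mul_cancel₀ hnb.ne', one_smul]
    rw [hc, real_inner_comm]; linarith [this]
  have h2 : -c < ‖a‖ * ‖b‖ := by
    have : (inner ℝ b (-a) : ℝ) < ‖b‖ * ‖-a‖ := by
      refine inner_lt_norm_mul_iff_real.mpr fun h => hnotsmul (-(‖a‖ / ‖b‖)) ?_
      simp only [norm_neg, smul_neg] at h
      have h' : ‖b‖ • a = -(‖a‖ • b) := neg_eq_iff_eq_neg.mp h.symm
      rw [neg_smul, div_eq_inv_mul, ← smul_smul, ← smul_neg, ← h', smul_smul,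
        inv_mul_cancel₀ hnb.ne', one_smul]
    rw [inner_neg_right, norm_neg, real_inner_comm] at this
    rw [hc]; linarith [this]
  have hD : (0:ℝ) < ‖a‖ ^ 2 * ‖b‖ ^ 2 - c ^ 2 := by nlinarith
  have hba : (inner ℝ b a : ℝ) = c := (real_inner_comm b a).symm
  have hinner : (inner ℝ (a - Pba) (b - Pab) : ℝ)
      = c * (c ^ 2 - ‖a‖ ^ 2 * ‖b‖ ^ 2) / (‖a‖ ^ 2 * ‖b‖ ^ 2) := by
    simp only [hPba, hPab, inner_sub_left, inner_sub_right, real_inner_smul_left,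
      real_inner_smul_right, real_inner_self_eq_norm_sq, hba, ← hc]
    field_simp
    ring
  have hn1 : ‖a - Pba‖ ^ 2 = (‖a‖ ^ 2 * ‖b‖ ^ 2 - c ^ 2) / ‖b‖ ^ 2 := by
    rw [hPba, @norm_sub_sq_real, real_inner_smul_right, norm_smul, mul_pow,
      Real.norm_eq_abs, sq_abs, ← hc]
    field_simp
    ring
  have hn2 : ‖b - Pab‖ ^ 2 = (‖a‖ ^ 2 * ‖b‖ ^ 2 - c ^ 2) / ‖a‖ ^ 2 := by
    rw [hPab, @norm_sub_sq_real, real_inner_smul_right, norm_smul, mul_pow,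
      Real.norm_eq_abs, sq_abs, hba]
    field_simp
    ring
  have hprod : ‖a - Pba‖ * ‖b - Pab‖
      = (‖a‖ ^ 2 * ‖b‖ ^ 2 - c ^ 2) / (‖a‖ * ‖b‖) := by
    have hsq : (‖a - Pba‖ * ‖b - Pab‖) ^ 2
        = ((‖a‖ ^ 2 * ‖b‖ ^ 2 - c ^ 2) / (‖a‖ * ‖b‖)) ^ 2 := by
      rw [mul_pow, hn1, hn2, div_pow]
      field_simp
    have h0 : 0 ≤ ‖a - Pba‖ * ‖b - Pab‖ := by positivity
    have h0' : 0 ≤ (‖a‖ ^ 2 * ‖b‖ ^ 2 - c ^ 2) / (‖a‖ * ‖b‖) := by positivity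
    nlinarith [hsq, h0, h0']
  rw [InnerProductGeometry.cos_angle, InnerProductGeometry.cos_angle, hinner, hprod, ← hc]
  field_simp
  ring
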